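/- Let G be a real Lie group with Lie algebra 𝔤 equipped with a norm. Then there exists κ > 0 such that for every g ∈ G, ‖Ad(g^{-1})‖ ≤ ‖Ad(g)‖^κ; consequently, for nonzero v ∈ 𝔤, log(1/‖Ad(g)v‖) − log(1/‖v‖) ≤ κ·log‖Ad(g)‖. -/

import Mathlib

set_option linter.unusedSectionVars false
set_option maxHeartbeats 1000000
set_option synthInstance.maxHeartbeats 400000

open Filter Metric Module Finset
open scoped Topology

namespace Stmt18Proof

variable {E : Type*} [NormedAddCommGroup E] [NormedSpace ℝ E] [FiniteDimensional ℝ E]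

noncomputable def detC (T : E →L[ℝ] E) : ℝ := LinearMap.det (T : E →ₗ[ℝ] E)

noncomputable def toMat (T : E →L[ℝ] E) :
    Matrix (Fin (finrank ℝ E)) (Fin (finrank ℝ E)) ℝ :=
  LinearMap.toMatrix (finBasis ℝ E) (finBasis ℝ E) (T : E →ₗ[ℝ] E)

noncomputable def ofMat (N : Matrix (Fin (finrank ℝ E)) (Fin (finrank ℝ E)) ℝ) :
    E →L[ℝ] E :=
  LinearMap.toContinuousLinearMap (Matrix.toLin (finBasis ℝ E) (finBasis ℝ E) N)

lemma toMat_mul (T S : E →L[ℝ] E) : toMat (T * S) = toMat T * toMat S := by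
  simp only [toMat, ContinuousLinearMap.mul_def, ContinuousLinearMap.coe_comp]
  exact LinearMap.toMatrix_comp (finBasis ℝ E) (finBasis ℝ E) (finBasis ℝ E) (T : E →ₗ[ℝ] E) (S : E →ₗ[ℝ] E)

lemma toMat_one : toMat (1 : E →L[ℝ] E) = 1 := by
  simp only [toMat, ContinuousLinearMap.one_def, ContinuousLinearMap.coe_id,
    LinearMap.toMatrix_id]

lemma toMat_smul (c : ℝ) (T : E →L[ℝ] E) : toMat (c • T) = c • toMat T := by
  simp only [toMat, ContinuousLinearMap.coe_smul, map_smul]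

lemma toMat_injective : Function.Injective (toMat (E := E)) := by
  intro U V h
  apply ContinuousLinearMap.coe_injective
  exact (LinearMap.toMatrix (finBasis ℝ E) (finBasis ℝ E)).injective h

lemma toMat_ofMat (N : Matrix (Fin (finrank ℝ E)) (Fin (finrank ℝ E)) ℝ) :
    toMat (ofMat (E := E) N) = N := by
  simp only [toMat, ofMat, LinearMap.coe_toContinuousLinearMap, LinearMap.toMatrix_toLin]

lemma ofMat_smul (c : ℝ) (N : Matrix (Fin (finrank ℝ E)) (Fin (finrank ℝ E)) ℝ) :
    ofMat (E := E) (c • N) = c • ofMat N := by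
  apply toMat_injective
  rw [toMat_ofMat, toMat_smul, toMat_ofMat]

lemma detC_eq (T : E →L[ℝ] E) : detC T = (toMat T).det :=
  (LinearMap.det_toMatrix _ _).symm

lemma toMat_continuous : Continuous (toMat (E := E)) :=
  LinearMap.continuous_of_finiteDimensional
    ((LinearMap.toMatrix (finBasis ℝ E) (finBasis ℝ E)).toLinearMap ∘ₗ
      ContinuousLinearMap.coeLM ℝ)

lemma ofMat_continuous : Continuous (ofMat (E := E)) :=
  LinearMap.continuous_of_finiteDimensional
    ((LinearMap.toContinuousLinearMap :
        (E →ₗ[ℝ] E) ≃ₗ[ℝ] E →L[ℝ] E).toLinearMap ∘ₗ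
      (Matrix.toLin (finBasis ℝ E) (finBasis ℝ E)).toLinearMap)

lemma detC_mul (T S : E →L[ℝ] E) : detC (T * S) = detC T * detC S := by
  rw [detC_eq, detC_eq, detC_eq, toMat_mul, Matrix.det_mul]

lemma detC_one : detC (1 : E →L[ℝ] E) = 1 := by
  rw [detC_eq, toMat_one, Matrix.det_one]

lemma detC_pow (T : E →L[ℝ] E) (k : ℕ) : detC (T ^ k) = detC T ^ k := by
  induction k with
  | zero => simp [detC_one]
  | succ k ih => rw [pow_succ, detC_mul, ih, pow_succ]

lemma abs_detC_inv (u : (E →L[ℝ] E)ˣ) (h : |detC (u : E →L[ℝ] E)| = 1) :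
    |detC ((↑u⁻¹ : E →L[ℝ] E))| = 1 := by
  have h1 : detC ((↑u⁻¹ : E →L[ℝ] E)) * detC (u : E →L[ℝ] E) = 1 := by
    rw [← detC_mul, ← Units.val_mul, inv_mul_cancel, Units.val_one, detC_one]
  have := congrArg abs h1
  rwa [abs_mul, h, mul_one, abs_one] at this

lemma detC_continuous : Continuous (detC (E := E)) := by
  have := toMat_continuous (E := E) |>.matrix_det
  exact Continuous.congr this fun T => (detC_eq T).symm

lemma exists_unit (T : E →L[ℝ] E) (h : detC T ≠ 0) :
    ∃ v : (E →L[ℝ] E)ˣ, (v : E →L[ℝ] E) = T := by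
  have hdet : IsUnit (toMat T).det := by
    rw [← detC_eq]; exact isUnit_iff_ne_zero.mpr h
  refine ⟨⟨T, ofMat (toMat T)⁻¹, ?_, ?_⟩, rfl⟩
  · apply toMat_injective
    rw [toMat_mul, toMat_ofMat, toMat_one, Matrix.mul_nonsing_inv _ hdet]
  · apply toMat_injective
    rw [toMat_mul, toMat_ofMat, toMat_one, Matrix.nonsing_inv_mul _ hdet]

lemma exists_adjBound [Nontrivial E] : ∃ C : ℝ, 1 ≤ C ∧ ∀ u : (E →L[ℝ] E)ˣ,
    |detC (u : E →L[ℝ] E)| = 1 →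
    ‖((u⁻¹ : (E →L[ℝ] E)ˣ) : E →L[ℝ] E)‖ ≤
      C * ‖(u : E →L[ℝ] E)‖ ^ (finrank ℝ E - 1) := by
  classical
  set n := finrank ℝ E with hn
  let AdjF : (E →L[ℝ] E) → (E →L[ℝ] E) := fun T => ofMat (Matrix.adjugate (toMat T))
  have hAdjcont : Continuous AdjF :=
    ofMat_continuous.comp (toMat_continuous.matrix_adjugate)
  have hAdjmul : ∀ T : E →L[ℝ] E, AdjF T * T = detC T • 1 := by
    intro T
    apply toMat_injective
    rw [toMat_mul, toMat_ofMat, toMat_smul, toMat_one, Matrix.adjugate_mul, detC_eq]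
  have hAdjsmul : ∀ (c : ℝ) (T : E →L[ℝ] E), AdjF (c • T) = c ^ (n - 1) • AdjF T := by
    intro c T
    simp only [AdjF, toMat_smul, Matrix.adjugate_smul, ofMat_smul, Fintype.card_fin]
    rw [hn]
  obtain ⟨z, hz, hzmax'⟩ :=
    (isCompact_closedBall (0 : E →L[ℝ] E) 1).exists_isMaxOn
      ⟨0, mem_closedBall_self zero_le_one⟩ (hAdjcont.norm.continuousOn)
  have hzmax : ∀ y ∈ closedBall (0 : E →L[ℝ] E) 1, ‖AdjF y‖ ≤ ‖AdjF z‖ :=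
    fun y hy => hzmax' hy
  set C : ℝ := max ‖AdjF z‖ 1 with hC
  refine ⟨C, le_max_right _ _, ?_⟩
  intro u hu
  set a : ℝ := ‖(u : E →L[ℝ] E)‖ with ha
  have hu0 : (u : E →L[ℝ] E) ≠ 0 := by
    intro h0
    have h1 : ((u⁻¹ : (E →L[ℝ] E)ˣ) : E →L[ℝ] E) * (u : E →L[ℝ] E) = 1 := by
      rw [← Units.val_mul, inv_mul_cancel, Units.val_one]
    rw [h0, mul_zero] at h1
    obtain ⟨x, hx⟩ := exists_ne (0 : E)
    apply hx
    have := congrArg (fun f : E →L[ℝ] E => f x) h1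
    simpa using this.symm
  have hapos : 0 < a := norm_pos_iff.mpr hu0
  have hEq : AdjF (u : E →L[ℝ] E) = detC (u : E →L[ℝ] E) • ((u⁻¹ : (E →L[ℝ] E)ˣ) : E →L[ℝ] E) := by
    calc AdjF (u : E →L[ℝ] E)
        = AdjF (u : E →L[ℝ] E) * ((u : E →L[ℝ] E) * ((u⁻¹ : (E →L[ℝ] E)ˣ) : E →L[ℝ] E)) := by
          rw [← Units.val_mul, mul_inv_cancel, Units.val_one, mul_one]
      _ = (AdjF (u : E →L[ℝ] E) * (u : E →L[ℝ] E)) * ((u⁻¹ : (E →L[ℝ] E)ˣ) : E →L[ℝ] E) := by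
          rw [mul_assoc]
      _ = (detC (u : E →L[ℝ] E) • (1 : E →L[ℝ] E)) * ((u⁻¹ : (E →L[ℝ] E)ˣ) : E →L[ℝ] E) := by
          rw [hAdjmul]
      _ = detC (u : E →L[ℝ] E) • ((u⁻¹ : (E →L[ℝ] E)ˣ) : E →L[ℝ] E) := by
          rw [smul_mul_assoc, one_mul]
  have hnormEq : ‖((u⁻¹ : (E →L[ℝ] E)ˣ) : E →L[ℝ] E)‖ = ‖AdjF (u : E →L[ℝ] E)‖ := by
    rw [hEq, norm_smul (detC (u : E →L[ℝ] E)) ((u⁻¹ : (E →L[ℝ] E)ˣ) : E →L[ℝ] E), Real.norm_eq_abs, hu, one_mul]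
  set S : E →L[ℝ] E := a⁻¹ • (u : E →L[ℝ] E) with hS
  have hSmem : S ∈ closedBall (0 : E →L[ℝ] E) 1 := by
    rw [mem_closedBall_zero_iff, hS, norm_smul a⁻¹ ((u : (E →L[ℝ] E))), Real.norm_eq_abs,
      abs_of_pos (inv_pos.mpr hapos)]
    rw [inv_mul_cancel₀ hapos.ne']
  have haS : a • S = (u : E →L[ℝ] E) := smul_inv_smul₀ hapos.ne' _
  calc ‖((u⁻¹ : (E →L[ℝ] E)ˣ) : E →L[ℝ] E)‖ = ‖AdjF (u : E →L[ℝ] E)‖ := hnormEq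
    _ = ‖AdjF (a • S)‖ := by rw [haS]
    _ = ‖a ^ (n - 1) • AdjF S‖ := by rw [hAdjsmul]
    _ = a ^ (n - 1) * ‖AdjF S‖ := by
        rw [norm_smul (a ^ (n-1)) (AdjF S), Real.norm_eq_abs, abs_of_pos (pow_pos hapos _)]
    _ ≤ a ^ (n - 1) * C := by
        refine mul_le_mul_of_nonneg_left ?_ (pow_pos hapos _).le
        exact le_trans (hzmax S hSmem) (le_max_left _ _)
    _ = C * a ^ (n - 1) := mul_comm _ _

section WithBound

variable [Nontrivial E] {C : ℝ}

lemma norm_one_R : ‖(1 : E →L[ℝ] E)‖ = 1 := by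
  rw [ContinuousLinearMap.one_def]; exact ContinuousLinearMap.norm_id

lemma one_le_norm_unit (hC1 : 1 ≤ C)
    (hC : ∀ u : (E →L[ℝ] E)ˣ, |detC (u : E →L[ℝ] E)| = 1 →
      ‖((u⁻¹ : (E →L[ℝ] E)ˣ) : E →L[ℝ] E)‖ ≤ C * ‖(u : E →L[ℝ] E)‖ ^ (finrank ℝ E - 1))
    (u : (E →L[ℝ] E)ˣ) (hu : |detC (u : E →L[ℝ] E)| = 1) :
    1 ≤ ‖(u : E →L[ℝ] E)‖ := by
  by_contra hlt
  push_neg at hlt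
  set a := ‖(u : E →L[ℝ] E)‖ with ha
  have ha0 : 0 ≤ a := norm_nonneg _
  have hk : ∀ k : ℕ, 1 ≤ a ^ (k + 1) * C := by
    intro k
    have hdetk : |detC ((u ^ (k+1) : (E →L[ℝ] E)ˣ) : E →L[ℝ] E)| = 1 := by
      rw [Units.val_pow_eq_pow_val, detC_pow, abs_pow, hu, one_pow]
    have hpow : ‖((u ^ (k+1) : (E →L[ℝ] E)ˣ) : E →L[ℝ] E)‖ ≤ a ^ (k+1) := by
      rw [Units.val_pow_eq_pow_val]; exact norm_pow_le' _ (Nat.succ_pos k)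
    have hinvC : ‖(((u ^ (k+1))⁻¹ : (E →L[ℝ] E)ˣ) : E →L[ℝ] E)‖ ≤ C := by
      refine (hC (u ^ (k+1)) hdetk).trans ?_
      have h1 : ‖((u ^ (k+1) : (E →L[ℝ] E)ˣ) : E →L[ℝ] E)‖ ^ (finrank ℝ E - 1) ≤ 1 := by
        apply pow_le_one₀ (norm_nonneg _)
        exact hpow.trans (pow_le_one₀ ha0 hlt.le)
      calc C * ‖((u ^ (k+1) : (E →L[ℝ] E)ˣ) : E →L[ℝ] E)‖ ^ (finrank ℝ E - 1) ≤ C * 1 :=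
            mul_le_mul_of_nonneg_left h1 (by linarith)
        _ = C := mul_one C
    have h2 : (1 : E →L[ℝ] E) =
        ((u ^ (k+1) : (E →L[ℝ] E)ˣ) : E →L[ℝ] E) *
          (((u ^ (k+1))⁻¹ : (E →L[ℝ] E)ˣ) : E →L[ℝ] E) := by
      rw [← Units.val_mul, mul_inv_cancel, Units.val_one]
    calc (1:ℝ) = ‖(1 : E →L[ℝ] E)‖ := norm_one_R.symm
      _ = ‖((u ^ (k+1) : (E →L[ℝ] E)ˣ) : E →L[ℝ] E) *
            (((u ^ (k+1))⁻¹ : (E →L[ℝ] E)ˣ) : E →L[ℝ] E)‖ := by rw [← h2]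
      _ ≤ ‖((u ^ (k+1) : (E →L[ℝ] E)ˣ) : E →L[ℝ] E)‖ *
            ‖(((u ^ (k+1))⁻¹ : (E →L[ℝ] E)ˣ) : E →L[ℝ] E)‖ := norm_mul_le _ _
      _ ≤ a ^ (k+1) * C := by
          apply mul_le_mul hpow hinvC (norm_nonneg _)
          exact pow_nonneg ha0 _
  have htend : Tendsto (fun k : ℕ => a ^ (k+1) * C) atTop (𝓝 (0 * C)) :=
    ((tendsto_pow_atTop_nhds_zero_of_lt_one ha0 hlt).comp (tendsto_add_atTop_nat 1)).mul_const C
  rw [zero_mul] at htend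
  have hev : ∀ᶠ k in atTop, a ^ (k+1) * C < 1 :=
    htend.eventually_lt_const (by norm_num)
  obtain ⟨k, hkk⟩ := hev.exists
  linarith [hk k]

lemma inv_norm_le_one (hC1 : 1 ≤ C)
    (hC : ∀ u : (E →L[ℝ] E)ˣ, |detC (u : E →L[ℝ] E)| = 1 →
      ‖((u⁻¹ : (E →L[ℝ] E)ˣ) : E →L[ℝ] E)‖ ≤ C * ‖(u : E →L[ℝ] E)‖ ^ (finrank ℝ E - 1))
    (u : (E →L[ℝ] E)ˣ) (hu : |detC (u : E →L[ℝ] E)| = 1)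
    (hnorm : ‖(u : E →L[ℝ] E)‖ ≤ 1) :
    ‖((u⁻¹ : (E →L[ℝ] E)ˣ) : E →L[ℝ] E)‖ ≤ 1 := by
  set x : ℕ → E →L[ℝ] E := fun k => ((u ^ k : (E →L[ℝ] E)ˣ) : E →L[ℝ] E) with hx
  have hxnorm : ∀ k, ‖x k‖ ≤ 1 := by
    intro k
    cases k with
    | zero => simp only [hx, pow_zero, Units.val_one]; rw [norm_one_R]
    | succ k =>
      show ‖((u ^ (k+1) : (E →L[ℝ] E)ˣ) : E →L[ℝ] E)‖ ≤ 1
      rw [Units.val_pow_eq_pow_val]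
      exact (norm_pow_le' _ (Nat.succ_pos k)).trans (pow_le_one₀ (norm_nonneg _) hnorm)
  have hdetk : ∀ k, |detC (x k)| = 1 := fun k => by
    show |detC ((u ^ k : (E →L[ℝ] E)ˣ) : E →L[ℝ] E)| = 1
    rw [Units.val_pow_eq_pow_val, detC_pow, abs_pow, hu, one_pow]
  have hxmem : ∀ k, x k ∈ closedBall (0 : E →L[ℝ] E) 1 := fun k =>
    mem_closedBall_zero_iff.mpr (hxnorm k)
  obtain ⟨L, hL, φ, hφ, hφt⟩ :=
    (isCompact_closedBall (0 : E →L[ℝ] E) 1).tendsto_subseq hxmem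
  set δ : ℕ → ℝ := fun j => ‖x (φ (j+1)) - x (φ j)‖ with hδdef
  have hδt : Tendsto δ atTop (𝓝 0) := by
    have h1 : Tendsto (fun j => x (φ (j+1))) atTop (𝓝 L) :=
      hφt.comp (tendsto_add_atTop_nat 1)
    have h2 := (h1.sub hφt).norm
    simp only [sub_self, norm_zero] at h2
    exact h2
  have hφlt : ∀ j, φ j < φ (j+1) := fun j => hφ (Nat.lt_succ_self j)
  set m : ℕ → ℕ := fun j => φ (j+1) - φ j with hm
  have hm1 : ∀ j, 1 ≤ m j := fun j => by
    have := hφlt j; simp only [hm]; omega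
  have hadd : ∀ j, φ (j+1) = φ j + m j := fun j => by
    have := hφlt j; simp only [hm]; omega
  have hkey1 : ∀ j, ‖x (m j) - 1‖ ≤ C * δ j := by
    intro j
    have hsplit : x (φ (j+1)) - x (φ j) = x (φ j) * (x (m j) - 1) := by
      rw [mul_sub, mul_one]
      congr 1
      simp only [hx]
      rw [← Units.val_mul, ← pow_add, ← hadd j]
    have heq : x (m j) - 1 =
        (((u ^ (φ j))⁻¹ : (E →L[ℝ] E)ˣ) : E →L[ℝ] E) * (x (φ (j+1)) - x (φ j)) := by
      rw [hsplit, ← mul_assoc, ← Units.val_mul, inv_mul_cancel, Units.val_one, one_mul]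
    rw [heq]
    have hinvC : ‖(((u ^ (φ j))⁻¹ : (E →L[ℝ] E)ˣ) : E →L[ℝ] E)‖ ≤ C := by
      refine (hC (u ^ (φ j)) (hdetk (φ j))).trans ?_
      have h1 : ‖((u ^ (φ j) : (E →L[ℝ] E)ˣ) : E →L[ℝ] E)‖ ^ (finrank ℝ E - 1) ≤ 1 :=
        pow_le_one₀ (norm_nonneg _) (hxnorm (φ j))
      calc C * ‖((u ^ (φ j) : (E →L[ℝ] E)ˣ) : E →L[ℝ] E)‖ ^ (finrank ℝ E - 1) ≤ C * 1 :=
            mul_le_mul_of_nonneg_left h1 (by linarith)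
        _ = C := mul_one C
    calc ‖(((u ^ (φ j))⁻¹ : (E →L[ℝ] E)ˣ) : E →L[ℝ] E) * (x (φ (j+1)) - x (φ j))‖
        ≤ ‖(((u ^ (φ j))⁻¹ : (E →L[ℝ] E)ˣ) : E →L[ℝ] E)‖ * δ j := norm_mul_le _ _
      _ ≤ C * δ j := mul_le_mul_of_nonneg_right hinvC (norm_nonneg _)
  have hkey2 : ∀ j, ‖((u⁻¹ : (E →L[ℝ] E)ˣ) : E →L[ℝ] E)‖ * (1 - C * δ j) ≤ 1 := by
    intro j
    set w : E →L[ℝ] E := (((u ^ (m j))⁻¹ : (E →L[ℝ] E)ˣ) : E →L[ℝ] E) with hw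
    have hwx : w * x (m j) = 1 := by
      simp only [hw, hx]
      rw [← Units.val_mul, inv_mul_cancel, Units.val_one]
    have hw_eq : w = w * (1 - x (m j)) + 1 := by
      rw [mul_sub, mul_one, hwx, sub_add_cancel]
    have hwnorm : ‖w‖ ≤ ‖w‖ * (C * δ j) + 1 := by
      calc ‖w‖ = ‖w * (1 - x (m j)) + 1‖ := by rw [← hw_eq]
        _ ≤ ‖w * (1 - x (m j))‖ + ‖(1 : E →L[ℝ] E)‖ := norm_add_le _ _
        _ ≤ ‖w‖ * ‖1 - x (m j)‖ + 1 := by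
            rw [norm_one_R]
            exact add_le_add (norm_mul_le w _) le_rfl
        _ ≤ ‖w‖ * (C * δ j) + 1 := by
            have : ‖1 - x (m j)‖ = ‖x (m j) - 1‖ := by rw [← norm_neg, neg_sub]
            have h2 := hkey1 j
            have := mul_le_mul_of_nonneg_left (this ▸ h2) (norm_nonneg w)
            linarith
    have hww : ‖w‖ * (1 - C * δ j) ≤ 1 := by nlinarith [norm_nonneg w]
    have hgp : u⁻¹ = u ^ (m j - 1) * (u ^ (m j))⁻¹ := by
      rw [eq_mul_inv_iff_mul_eq]
      have hmj : m j = (m j - 1) + 1 := by have := hm1 j; omega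
      calc u⁻¹ * u ^ (m j) = u⁻¹ * (u * u ^ (m j - 1)) := by
            conv_lhs => rw [hmj, pow_succ']
        _ = u ^ (m j - 1) := inv_mul_cancel_left _ _
    have huinv : ‖((u⁻¹ : (E →L[ℝ] E)ˣ) : E →L[ℝ] E)‖ ≤ ‖w‖ := by
      calc ‖((u⁻¹ : (E →L[ℝ] E)ˣ) : E →L[ℝ] E)‖
          = ‖x (m j - 1) * w‖ := by rw [hgp]; rw [Units.val_mul]
        _ ≤ ‖x (m j - 1)‖ * ‖w‖ := norm_mul_le _ _
        _ ≤ 1 * ‖w‖ := mul_le_mul_of_nonneg_right (hxnorm _) (norm_nonneg _)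
        _ = ‖w‖ := one_mul _
    rcases le_or_gt 0 (1 - C * δ j) with hpos | hneg
    · exact (mul_le_mul_of_nonneg_right huinv hpos).trans hww
    · have : ‖((u⁻¹ : (E →L[ℝ] E)ˣ) : E →L[ℝ] E)‖ * (1 - C * δ j) ≤ 0 :=
        mul_nonpos_of_nonneg_of_nonpos (norm_nonneg _) hneg.le
      linarith
  have ht : Tendsto (fun j => ‖((u⁻¹ : (E →L[ℝ] E)ˣ) : E →L[ℝ] E)‖ * (1 - C * δ j)) atTop
      (𝓝 (‖((u⁻¹ : (E →L[ℝ] E)ˣ) : E →L[ℝ] E)‖ * (1 - C * 0))) := by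
    apply Tendsto.const_mul
    exact (tendsto_const_nhds.sub (hδt.const_mul C))
  have := le_of_tendsto ht (Eventually.of_forall hkey2)
  simpa using this

end WithBound

lemma exp_quad {y : ℝ} (h0 : 0 ≤ y) (h1 : y ≤ 1) : Real.exp y - 1 - y ≤ y ^ 2 := by
  have hb := Real.exp_bound (by rwa [abs_of_nonneg h0]) (by norm_num : 0 < 2)
  have hsum : ∑ i ∈ Finset.range 2, y ^ i / (Nat.factorial i) = 1 + y := by
    simp [Finset.sum_range_succ]
  rw [hsum, abs_of_nonneg h0] at hb
  have h2 := (abs_sub_le_iff.mp hb).1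
  have hy2 : y ^ 2 * (((2:ℕ).succ : ℝ) / ((2:ℕ).factorial * 2)) ≤ y ^ 2 * 1 := by
    apply mul_le_mul_of_nonneg_left _ (sq_nonneg y)
    norm_num [Nat.factorial]
  rw [mul_one] at hy2
  linarith

lemma pow_estimate (T : E →L[ℝ] E) {m : ℕ} (hm : 1 ≤ m) :
    ‖T ^ m - 1 - (m : ℝ) • (T - 1)‖ ≤ (1 + ‖T - 1‖) ^ m - 1 - m * ‖T - 1‖ := by
  classical
  set X : E →L[ℝ] E := T - 1 with hX
  set e : ℝ := ‖X‖ with he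
  have hT : T = X + 1 := by rw [hX, sub_add_cancel]
  have hbin : T ^ m =
      ∑ k ∈ Finset.range (m+1), X ^ k * (1:E →L[ℝ] E) ^ (m - k) * ((m.choose k : ℕ) : E →L[ℝ] E) := by
    rw [hT]
    exact Commute.add_pow (Commute.one_right X) m
  have hbin' : T ^ m = ∑ k ∈ Finset.range (m+1), (m.choose k) • X ^ k := by
    rw [hbin]
    refine Finset.sum_congr rfl fun k _ => ?_
    rw [one_pow, mul_one, (Nat.commute_cast (X ^ k) (m.choose k)).eq, ← nsmul_eq_mul]
  have hdec : ∑ k ∈ Finset.range (m+1), (m.choose k) • X ^ k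
      = 1 + (m : ℝ) • X + ∑ k ∈ Finset.Ico 2 (m+1), (m.choose k) • X ^ k := by
    rw [Finset.range_eq_Ico,
      Finset.sum_eq_sum_Ico_succ_bot (by omega : 0 < m + 1),
      Finset.sum_eq_sum_Ico_succ_bot (by omega : 1 < m + 1)]
    rw [Nat.choose_zero_right, Nat.choose_one_right, pow_zero, pow_one, one_smul,
      Nat.cast_smul_eq_nsmul ℝ m X]
    rw [← add_assoc]
  have hmain : T ^ m - 1 - (m : ℝ) • X = ∑ k ∈ Finset.Ico 2 (m+1), (m.choose k) • X ^ k := by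
    rw [hbin', hdec]; abel
  have hRHSbin : (1 + e) ^ m = ∑ k ∈ Finset.range (m+1), e ^ k * ((m.choose k : ℕ) : ℝ) := by
    rw [add_comm 1 e]
    have := add_pow e 1 m
    simpa using this
  have hRHSdec : (1 + e) ^ m = 1 + m * e + ∑ k ∈ Finset.Ico 2 (m+1), e ^ k * ((m.choose k : ℕ) : ℝ) := by
    rw [hRHSbin, Finset.range_eq_Ico,
      Finset.sum_eq_sum_Ico_succ_bot (by omega : 0 < m + 1),
      Finset.sum_eq_sum_Ico_succ_bot (by omega : 1 < m + 1)]
    rw [Nat.choose_zero_right, Nat.choose_one_right, pow_zero, pow_one]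
    push_cast
    ring
  rw [hmain]
  have hnorm : ‖∑ k ∈ Finset.Ico 2 (m+1), (m.choose k) • X ^ k‖
      ≤ ∑ k ∈ Finset.Ico 2 (m+1), e ^ k * ((m.choose k : ℕ) : ℝ) := by
    refine (norm_sum_le _ _).trans ?_
    refine Finset.sum_le_sum fun k hk => ?_
    have hk2 : 2 ≤ k := (Finset.mem_Ico.mp hk).1
    calc ‖(m.choose k) • X ^ k‖ ≤ (m.choose k : ℝ) * ‖X ^ k‖ := norm_nsmul_le
      _ ≤ (m.choose k : ℝ) * e ^ k := by
          refine mul_le_mul_of_nonneg_left ?_ (by positivity)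
          exact norm_pow_le' X (by omega)
      _ = e ^ k * ((m.choose k : ℕ) : ℝ) := mul_comm _ _
  refine hnorm.trans ?_
  have := hRHSdec
  linarith

lemma one_add_pow_le_exp (e : ℝ) (he : 0 ≤ e) (m : ℕ) :
    (1 + e) ^ m ≤ Real.exp (m * e) := by
  have h1 : (1 + e) ≤ Real.exp e := by
    have := Real.add_one_le_exp e
    linarith
  calc (1 + e) ^ m ≤ (Real.exp e) ^ m := pow_le_pow_left₀ (by linarith) h1 m
    _ = Real.exp (m * e) := (Real.exp_nat_mul e m).symm

lemma key [Nontrivial E] : ∃ κ : ℝ, 1 ≤ κ ∧ ∀ u : (E →L[ℝ] E)ˣ,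
    |detC (u : E →L[ℝ] E)| = 1 →
    ‖((u⁻¹ : (E →L[ℝ] E)ˣ) : E →L[ℝ] E)‖ ≤ ‖(u : E →L[ℝ] E)‖ ^ (κ : ℝ) := by
  obtain ⟨C, hC1, hC⟩ := exists_adjBound (E := E)
  by_contra hcon
  push_neg at hcon
  have H : ∀ j : ℕ, ∃ u : (E →L[ℝ] E)ˣ, |detC (u : E →L[ℝ] E)| = 1 ∧
      ‖(u : E →L[ℝ] E)‖ ^ ((j:ℝ)+1) < ‖((u⁻¹ : (E →L[ℝ] E)ˣ) : E →L[ℝ] E)‖ := by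
    intro j
    obtain ⟨u, hu, hlt⟩ := hcon ((j:ℝ)+1) (by have := Nat.cast_nonneg (α := ℝ) j; linarith)
    exact ⟨u, hu, hlt⟩
  choose u hdetu hbad using H
  set n := finrank ℝ E with hn
  have hnpos : 0 < n := finrank_pos
  set A : ℕ → E →L[ℝ] E := fun j => ((u j : (E →L[ℝ] E)ˣ) : E →L[ℝ] E) with hA
  set B : ℕ → E →L[ℝ] E := fun j => (((u j)⁻¹ : (E →L[ℝ] E)ˣ) : E →L[ℝ] E) with hB
  set a : ℕ → ℝ := fun j => ‖A j‖ with ha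
  set b : ℕ → ℝ := fun j => ‖B j‖ with hb
  have hdetinv : ∀ j, |detC (B j)| = 1 := fun j => abs_detC_inv _ (hdetu j)
  have ha1 : ∀ j, 1 ≤ a j := fun j => one_le_norm_unit hC1 hC _ (hdetu j)
  have hapos : ∀ j, (0:ℝ) < a j := fun j => lt_of_lt_of_le one_pos (ha1 j)
  have hb1 : ∀ j, 1 ≤ b j := fun j => one_le_norm_unit hC1 hC ((u j)⁻¹) (hdetinv j)
  have hbpos : ∀ j, (0:ℝ) < b j := fun j => lt_of_lt_of_le one_pos (hb1 j)
  have hba : ∀ j, b j ≤ C * a j ^ (n - 1) := fun j => hC (u j) (hdetu j)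
  have hABone : ∀ j, A j * B j = 1 := fun j => by
    rw [hA, hB]; rw [← Units.val_mul, mul_inv_cancel, Units.val_one]
  have hBAone : ∀ j, B j * A j = 1 := fun j => by
    rw [hA, hB]; rw [← Units.val_mul, inv_mul_cancel, Units.val_one]
  set α : ℕ → ℝ := fun j => Real.log (a j) with hα
  set β : ℕ → ℝ := fun j => Real.log (b j) with hβ
  have hα0 : ∀ j, 0 ≤ α j := fun j => Real.log_nonneg (ha1 j)
  have hβα : ∀ j : ℕ, ((j:ℝ)+1) * α j < β j := by
    intro j
    have h1 : Real.log (a j ^ ((j:ℝ)+1)) < Real.log (b j) :=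
      Real.log_lt_log (Real.rpow_pos_of_pos (hapos j) _) (hbad j)
    rwa [Real.log_rpow (hapos j)] at h1
  have hβC : ∀ j, β j ≤ Real.log C + ((n-1:ℕ):ℝ) * α j := by
    intro j
    have h1 : Real.log (b j) ≤ Real.log (C * a j ^ (n-1)) :=
      Real.log_le_log (hbpos j) (hba j)
    rwa [Real.log_mul (ne_of_gt (lt_of_lt_of_le one_pos hC1)) (ne_of_gt (pow_pos (hapos j) _)), Real.log_pow] at h1
  have hαj : ∀ j : ℕ, ((j:ℝ) + 1 - ((n-1:ℕ):ℝ)) * α j ≤ Real.log C := by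
    intro j
    have h1 := hβα j
    have h2 := hβC j
    have h3 : ((j:ℝ)+1-((n-1:ℕ):ℝ)) * α j
        = ((j:ℝ)+1) * α j - ((n-1:ℕ):ℝ) * α j := by ring
    linarith
  set D : ℝ := max (Real.log C) 0 with hD
  have hαtend : Tendsto α atTop (𝓝 0) := by
    have hupper : ∀ᶠ j in atTop, α j ≤ 2 * D / ((j:ℝ)+1) := by
      filter_upwards [eventually_ge_atTop (2 * n)] with j hj
      have hcast : ((n - 1:ℕ):ℝ) ≤ (n:ℝ) := Nat.cast_le.mpr (Nat.sub_le n 1)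
      have hjn : ((j:ℝ)+1)/2 ≤ ((j:ℝ)+1-((n-1:ℕ):ℝ)) := by
        have h2n : ((2*n : ℕ):ℝ) ≤ (j:ℝ) := Nat.cast_le.mpr hj
        push_cast at h2n
        linarith
      have h3 := hαj j
      have h4 : α j * (((j:ℝ)+1)/2) ≤ D := by
        have h5 : α j * (((j:ℝ)+1)/2) ≤ α j * ((j:ℝ)+1-((n-1:ℕ):ℝ)) :=
          mul_le_mul_of_nonneg_left hjn (hα0 j)
        have h6 : Real.log C ≤ D := le_max_left _ _
        nlinarith
      have hj1 : (0:ℝ) < (j:ℝ)+1 := by positivity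
      rw [le_div_iff₀ hj1]
      nlinarith
    have hlow : ∀ᶠ j in atTop, (0:ℝ) ≤ α j := Eventually.of_forall hα0
    have hhigh : Tendsto (fun j : ℕ => 2 * D / ((j:ℝ)+1)) atTop (𝓝 0) := by
      have := tendsto_one_div_add_atTop_nhds_zero_nat.const_mul (2*D)
      simp only [mul_one_div] at this
      simpa using this
    exact tendsto_of_tendsto_of_tendsto_of_le_of_le' tendsto_const_nhds hhigh hlow hupper
  have hatend : Tendsto a atTop (𝓝 1) := by
    have h1 : Tendsto (fun j => Real.exp (α j)) atTop (𝓝 (Real.exp 0)) :=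
      (Real.continuous_exp.tendsto 0).comp hαtend
    rw [Real.exp_zero] at h1
    exact h1.congr fun j => Real.exp_log (hapos j)
  obtain ⟨Ca', hCa'⟩ := hatend.bddAbove_range
  set Ca : ℝ := max Ca' 1 with hCadef
  have haCa : ∀ j, a j ≤ Ca := fun j => le_trans (hCa' ⟨j, rfl⟩) (le_max_left _ _)
  set Cb : ℝ := C * Ca ^ (n - 1) with hCbdef
  have hbCb : ∀ j, b j ≤ Cb := by
    intro j
    refine (hba j).trans ?_
    refine mul_le_mul_of_nonneg_left ?_ (by linarith)
    exact pow_le_pow_left₀ (le_of_lt (hapos j)) (haCa j) _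
  set K : Set (E →L[ℝ] E) := {T | ‖T‖ ≤ 1 ∧ |detC T| = 1} with hK
  have hKsub : K ⊆ closedBall 0 1 := fun T hT => mem_closedBall_zero_iff.mpr hT.1
  have hKclosed : IsClosed K := by
    have h1 : IsClosed {T : E →L[ℝ] E | ‖T‖ ≤ 1} := isClosed_le continuous_norm continuous_const
    have h2 : IsClosed {T : E →L[ℝ] E | |detC T| = 1} :=
      isClosed_eq (detC_continuous.abs) continuous_const
    exact h1.inter h2
  have hKcomp : IsCompact K := (isCompact_closedBall 0 1).of_isClosed_subset hKclosed hKsub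
  have h1K : (1 : E →L[ℝ] E) ∈ K := ⟨le_of_eq norm_one_R, by rw [detC_one, abs_one]⟩
  have hKmul : ∀ x ∈ K, ∀ y ∈ K, x * y ∈ K := by
    intro x hx y hy
    refine ⟨le_trans (norm_mul_le x y) ?_, ?_⟩
    · calc ‖x‖ * ‖y‖ ≤ 1 * 1 := mul_le_mul hx.1 hy.1 (norm_nonneg _) zero_le_one
        _ = 1 := one_mul 1
    · rw [detC_mul, abs_mul, hx.2, hy.2, one_mul]
  have hKunit : ∀ k ∈ K, ∃ v : (E →L[ℝ] E)ˣ, (v : E →L[ℝ] E) = k ∧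
      ((v⁻¹ : (E →L[ℝ] E)ˣ) : E →L[ℝ] E) ∈ K := by
    intro k hk
    have hdk : detC k ≠ 0 := by
      intro h0
      have := hk.2
      rw [h0, abs_zero] at this
      norm_num at this
    obtain ⟨v, hv⟩ := exists_unit k hdk
    have hdetv : |detC (v : E →L[ℝ] E)| = 1 := by rw [hv]; exact hk.2
    have hnv : ‖(v : E →L[ℝ] E)‖ ≤ 1 := by rw [hv]; exact hk.1
    have hinv : ‖((v⁻¹ : (E →L[ℝ] E)ˣ) : E →L[ℝ] E)‖ ≤ 1 := inv_norm_le_one hC1 hC v hdetv hnv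
    exact ⟨v, hv, hinv, abs_detC_inv v hdetv⟩
  have hisoL : ∀ (v : (E →L[ℝ] E)ˣ), (v : E →L[ℝ] E) ∈ K →
      ((v⁻¹ : (E →L[ℝ] E)ˣ) : E →L[ℝ] E) ∈ K →
      ∀ T : E →L[ℝ] E, ‖(v : E →L[ℝ] E) * T‖ = ‖T‖ := by
    intro v hv hvinv T
    refine le_antisymm ?_ ?_
    · calc ‖(v : E →L[ℝ] E) * T‖ ≤ ‖(v : E →L[ℝ] E)‖ * ‖T‖ := norm_mul_le _ _
        _ ≤ 1 * ‖T‖ := mul_le_mul_of_nonneg_right hv.1 (norm_nonneg _)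
        _ = ‖T‖ := one_mul _
    · calc ‖T‖ = ‖((v⁻¹ : (E →L[ℝ] E)ˣ) : E →L[ℝ] E) * ((v : E →L[ℝ] E) * T)‖ := by
            rw [← mul_assoc, ← Units.val_mul, inv_mul_cancel, Units.val_one, one_mul]
        _ ≤ ‖((v⁻¹ : (E →L[ℝ] E)ˣ) : E →L[ℝ] E)‖ * ‖(v : E →L[ℝ] E) * T‖ := norm_mul_le _ _
        _ ≤ 1 * ‖(v : E →L[ℝ] E) * T‖ := mul_le_mul_of_nonneg_right hvinv.1 (norm_nonneg _)
        _ = _ := one_mul _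
  have hisoR : ∀ (v : (E →L[ℝ] E)ˣ), (v : E →L[ℝ] E) ∈ K →
      ((v⁻¹ : (E →L[ℝ] E)ˣ) : E →L[ℝ] E) ∈ K →
      ∀ T : E →L[ℝ] E, ‖T * (v : E →L[ℝ] E)‖ = ‖T‖ := by
    intro v hv hvinv T
    refine le_antisymm ?_ ?_
    · calc ‖T * (v : E →L[ℝ] E)‖ ≤ ‖T‖ * ‖(v : E →L[ℝ] E)‖ := norm_mul_le _ _
        _ ≤ ‖T‖ * 1 := mul_le_mul_of_nonneg_left hv.1 (norm_nonneg _)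
        _ = ‖T‖ := mul_one _
    · calc ‖T‖ = ‖(T * (v : E →L[ℝ] E)) * ((v⁻¹ : (E →L[ℝ] E)ˣ) : E →L[ℝ] E)‖ := by
            rw [mul_assoc, ← Units.val_mul, mul_inv_cancel, Units.val_one, mul_one]
        _ ≤ ‖T * (v : E →L[ℝ] E)‖ * ‖((v⁻¹ : (E →L[ℝ] E)ˣ) : E →L[ℝ] E)‖ := norm_mul_le _ _
        _ ≤ ‖T * (v : E →L[ℝ] E)‖ * 1 := mul_le_mul_of_nonneg_left hvinv.1 (norm_nonneg _)
        _ = _ := mul_one _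
  set d : ℕ → ℝ := fun j => infDist (A j) K with hd
  have hdtend : Tendsto d atTop (𝓝 0) := by
    refine Metric.tendsto_atTop.mpr ?_
    intro ε hε
    by_contra hnot
    push_neg at hnot
    obtain ⟨ψ, hψmono, hψ⟩ := Filter.extraction_of_frequently_atTop
      (Filter.frequently_atTop.mpr hnot)
    have hAmem : ∀ i, A (ψ i) ∈ closedBall (0 : E →L[ℝ] E) Ca := fun i =>
      mem_closedBall_zero_iff.mpr (haCa _)
    obtain ⟨L, hLmem, φ₂, hφ₂mono, hφ₂t⟩ :=
      (isCompact_closedBall (0 : E →L[ℝ] E) Ca).tendsto_subseq hAmem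
    have hBmem : ∀ i, B (ψ (φ₂ i)) ∈ closedBall (0 : E →L[ℝ] E) Cb := fun i =>
      mem_closedBall_zero_iff.mpr (hbCb _)
    obtain ⟨L', hL'mem, φ₃, hφ₃mono, hφ₃t⟩ :=
      (isCompact_closedBall (0 : E →L[ℝ] E) Cb).tendsto_subseq hBmem
    have hAt : Tendsto (fun i => A (ψ (φ₂ (φ₃ i)))) atTop (𝓝 L) :=
      hφ₂t.comp hφ₃mono.tendsto_atTop
    have hBt : Tendsto (fun i => B (ψ (φ₂ (φ₃ i)))) atTop (𝓝 L') := hφ₃t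
    have hmono : StrictMono (fun i => ψ (φ₂ (φ₃ i))) :=
      hψmono.comp (hφ₂mono.comp hφ₃mono)
    have hLL' : L * L' = 1 := by
      have h1 : Tendsto (fun i => A (ψ (φ₂ (φ₃ i))) * B (ψ (φ₂ (φ₃ i)))) atTop (𝓝 (L * L')) :=
        hAt.mul hBt
      have h2 : (fun i => A (ψ (φ₂ (φ₃ i))) * B (ψ (φ₂ (φ₃ i)))) = fun _ => (1 : E →L[ℝ] E) :=
        funext fun i => hABone _
      rw [h2] at h1
      exact tendsto_nhds_unique h1 tendsto_const_nhds
    have hnormL : ‖L‖ = 1 := by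
      have h1 : Tendsto (fun i => a (ψ (φ₂ (φ₃ i)))) atTop (𝓝 ‖L‖) := hAt.norm
      have h2 : Tendsto (fun i => a (ψ (φ₂ (φ₃ i)))) atTop (𝓝 1) :=
        hatend.comp hmono.tendsto_atTop
      exact tendsto_nhds_unique h1 h2
    have hdetL : |detC L| = 1 := by
      have h1 : Tendsto (fun i => |detC (A (ψ (φ₂ (φ₃ i))))|) atTop (𝓝 |detC L|) :=
        (((detC_continuous).tendsto L).comp hAt).abs
      have h2 : (fun i => |detC (A (ψ (φ₂ (φ₃ i))))|) = fun _ => (1:ℝ) :=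
        funext fun i => hdetu _
      rw [h2] at h1
      exact tendsto_nhds_unique h1 tendsto_const_nhds
    have hLK : L ∈ K := ⟨le_of_eq hnormL, hdetL⟩
    have hcontra : Tendsto (fun i => d (ψ (φ₂ (φ₃ i)))) atTop (𝓝 0) := by
      have hle : ∀ i, d (ψ (φ₂ (φ₃ i))) ≤ dist (A (ψ (φ₂ (φ₃ i)))) L := fun i =>
        infDist_le_dist_of_mem hLK
      have h0 : ∀ i, (0:ℝ) ≤ d (ψ (φ₂ (φ₃ i))) := fun i => infDist_nonneg
      have hdist : Tendsto (fun i => dist (A (ψ (φ₂ (φ₃ i)))) L) atTop (𝓝 0) :=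
        tendsto_iff_dist_tendsto_zero.mp hAt
      exact tendsto_of_tendsto_of_tendsto_of_le_of_le tendsto_const_nhds hdist h0 hle
    have hev : ∀ᶠ i in atTop, d (ψ (φ₂ (φ₃ i))) < ε := hcontra.eventually_lt_const hε
    obtain ⟨i, hi⟩ := hev.exists
    have hcontra2 := hψ (φ₂ (φ₃ i))
    rw [Real.dist_eq, sub_zero, abs_of_nonneg infDist_nonneg] at hcontra2
    linarith
  -- nearest isometry and recentering
  have hKne : K.Nonempty := ⟨1, h1K⟩
  have hnear : ∀ j, ∃ k ∈ K, d j = dist (A j) k := fun j =>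
    hKcomp.exists_infDist_eq_dist hKne (A j)
  choose kk hkkK hkkd using hnear
  choose v hv hvinvK using fun j => hKunit (kk j) (hkkK j)
  set c : ℕ → (E →L[ℝ] E)ˣ := fun j => (v j)⁻¹ * u j with hc
  set CC : ℕ → E →L[ℝ] E := fun j => ((c j : (E →L[ℝ] E)ˣ) : E →L[ℝ] E) with hCC
  have hCCval : ∀ j, CC j = (((v j)⁻¹ : (E →L[ℝ] E)ˣ) : E →L[ℝ] E) * A j := fun j => by
    simp only [hCC, hc]
    exact Units.val_mul _ _
  have hvK : ∀ j, ((v j : (E →L[ℝ] E)ˣ) : E →L[ℝ] E) ∈ K := fun j => by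
    rw [hv j]; exact hkkK j
  have hvinvinv : ∀ j, ((((v j)⁻¹)⁻¹ : (E →L[ℝ] E)ˣ) : E →L[ℝ] E) ∈ K := fun j => by
    rw [inv_inv]; exact hvK j
  have hCCnorm : ∀ j, ‖CC j‖ = a j := fun j => by
    rw [hCCval j]
    exact hisoL ((v j)⁻¹) (hvinvK j) (hvinvinv j) (A j)
  have hCCinvnorm : ∀ j, ‖(((c j)⁻¹ : (E →L[ℝ] E)ˣ) : E →L[ℝ] E)‖ = b j := fun j => by
    have h1 : ((c j)⁻¹ : (E →L[ℝ] E)ˣ) = ((u j)⁻¹ * v j) := by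
      simp only [hc]; rw [mul_inv_rev, inv_inv]
    rw [h1, Units.val_mul]
    exact hisoR (v j) (hvK j) (hvinvK j) (B j)
  have hdetc : ∀ j, |detC (CC j)| = 1 := fun j => by
    rw [hCCval j, detC_mul, abs_mul, (hvinvK j).2, one_mul]
    exact hdetu j
  set EE : ℕ → E →L[ℝ] E := fun j => CC j - 1 with hEE
  set ee : ℕ → ℝ := fun j => ‖EE j‖ with hee
  have heq : ∀ j, ee j = d j := by
    intro j
    have h1 : EE j = (((v j)⁻¹ : (E →L[ℝ] E)ˣ) : E →L[ℝ] E) * (A j - kk j) := by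
      simp only [hEE]
      rw [hCCval j, mul_sub]
      congr 1
      rw [← hv j, ← Units.val_mul, inv_mul_cancel, Units.val_one]
    simp only [hee]
    rw [h1, hisoL ((v j)⁻¹) (hvinvK j) (hvinvinv j), ← dist_eq_norm, ← hkkd j]
  have hKdist : ∀ j, ∀ y ∈ K, ee j ≤ ‖CC j - y‖ := by
    intro j y hy
    have h1 : CC j - y = (((v j)⁻¹ : (E →L[ℝ] E)ˣ) : E →L[ℝ] E) * (A j - kk j * y) := by
      rw [hCCval j, mul_sub]
      congr 1
      rw [← hv j, ← mul_assoc, ← Units.val_mul, inv_mul_cancel, Units.val_one, one_mul]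
    rw [h1, hisoL ((v j)⁻¹) (hvinvK j) (hvinvinv j), ← dist_eq_norm, heq j]
    exact infDist_le_dist_of_mem (hKmul _ (hkkK j) _ hy)
  have hepos : ∀ j, 0 < ee j := by
    intro j
    rcases (norm_nonneg (EE j)).lt_or_eq with h | h
    · exact h
    · exfalso
      have hEE0 : EE j = 0 := norm_eq_zero.mp h.symm
      have hCC1 : CC j = 1 := by
        have := hEE0
        simp only [hEE] at this
        exact sub_eq_zero.mp this
      have hcj : c j = 1 := Units.ext (by rw [Units.val_one, ← hCC1])
      have hbj : b j = 1 := by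
        rw [← hCCinvnorm j, hcj, inv_one, Units.val_one, norm_one_R]
      have h3 : 1 ≤ a j ^ ((j:ℝ)+1) :=
        Real.one_le_rpow (ha1 j) (by positivity)
      have h2 := hbad j
      rw [show ‖((u j : (E →L[ℝ] E)ˣ) : E →L[ℝ] E)‖ = a j from rfl,
        show ‖(((u j)⁻¹ : (E →L[ℝ] E)ˣ) : E →L[ℝ] E)‖ = b j from rfl] at h2
      rw [hbj] at h2
      linarith
  have hetend : Tendsto ee atTop (𝓝 0) := hdtend.congr fun j => (heq j).symm
  have hble2 : ∀ j, b j * (1 - ee j) ≤ 1 := by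
    intro j
    set w : E →L[ℝ] E := (((c j)⁻¹ : (E →L[ℝ] E)ˣ) : E →L[ℝ] E) with hw
    have hwx : w * CC j = 1 := by
      simp only [hw, hCC]
      rw [← Units.val_mul, inv_mul_cancel, Units.val_one]
    have hw_eq : w = w * (1 - CC j) + 1 := by
      rw [mul_sub, mul_one, hwx, sub_add_cancel]
    have hmin : ‖(1 : E →L[ℝ] E) - CC j‖ = ee j := by
      simp only [hee, hEE]
      rw [← norm_neg, neg_sub]
    have h1 : ‖w‖ ≤ ‖w‖ * ee j + 1 := by
      calc ‖w‖ = ‖w * (1 - CC j) + 1‖ := by rw [← hw_eq]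
        _ ≤ ‖w * (1 - CC j)‖ + ‖(1 : E →L[ℝ] E)‖ := norm_add_le _ _
        _ ≤ ‖w‖ * ‖(1 : E →L[ℝ] E) - CC j‖ + 1 := by
            rw [norm_one_R]
            exact add_le_add (norm_mul_le _ _) le_rfl
        _ = ‖w‖ * ee j + 1 := by rw [hmin]
    have h2 : ‖w‖ = b j := hCCinvnorm j
    rw [h2] at h1
    nlinarith
  have hβe : ∀ j, ee j ≤ 1/2 → β j ≤ 2 * ee j := by
    intro j hej
    have h1 := hble2 j
    have h2 : (0:ℝ) < 1 - ee j := by linarith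
    have hble : b j ≤ (1 - ee j)⁻¹ := by
      rw [← one_div, le_div_iff₀ h2]
      exact hble2 j
    have h3 : β j ≤ Real.log ((1 - ee j)⁻¹) := Real.log_le_log (hbpos j) hble
    have h4 : Real.log ((1 - ee j)⁻¹) ≤ (1 - ee j)⁻¹ - 1 :=
      Real.log_le_sub_one_of_pos (by positivity)
    have h5 : (1 - ee j)⁻¹ - 1 = ee j / (1 - ee j) := by field_simp; ring
    have h6 : ee j / (1 - ee j) ≤ 2 * ee j := by
      rw [div_le_iff₀ h2]
      nlinarith [(hepos j).le]
    linarith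
  have hαe : ∀ j, ee j ≤ 1/2 → α j ≤ 2 * ee j / ((j:ℝ)+1) := by
    intro j hej
    have h1 := hβα j
    have h2 := hβe j hej
    have hj1 : (0:ℝ) < (j:ℝ)+1 := by positivity
    rw [le_div_iff₀ hj1]
    nlinarith [hα0 j]
  -- normalized directions
  set Y : ℕ → E →L[ℝ] E := fun j => (ee j)⁻¹ • EE j with hYdef
  have hYsph : ∀ j, Y j ∈ sphere (0 : E →L[ℝ] E) 1 := by
    intro j
    rw [mem_sphere_zero_iff_norm]
    simp only [hYdef]
    rw [norm_smul ((ee j)⁻¹) (EE j), Real.norm_eq_abs,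
      abs_of_pos (inv_pos.mpr (hepos j))]
    have : ‖EE j‖ = ee j := rfl
    rw [this, inv_mul_cancel₀ (hepos j).ne']
  obtain ⟨Y₀, hY₀mem, ψ, hψmono, hψt⟩ :=
    (isCompact_sphere (0 : E →L[ℝ] E) 1).tendsto_subseq hYsph
  have hev1 : ∀ᶠ i in atTop, ‖Y (ψ i) - Y₀‖ < 1/4 := by
    have h1 : Tendsto (fun i => ‖Y (ψ i) - Y₀‖) atTop (𝓝 0) := by
      have := (hψt.sub (tendsto_const_nhds (x := Y₀))).norm
      simpa using this
    exact h1.eventually_lt_const (by norm_num)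
  have hev2 : ∀ᶠ i in atTop, ee (ψ i) < 1/16 :=
    (hetend.comp hψmono.tendsto_atTop).eventually_lt_const (by norm_num)
  obtain ⟨J, hJ1, hJ2⟩ := (hev1.and hev2).exists
  set τ : ℝ := ee (ψ J) with hτ
  have hτpos : 0 < τ := hepos _
  have hτlt : τ < 1/16 := hJ2
  -- powers
  set m : ℕ → ℕ := fun i => ⌈τ / ee (ψ i)⌉₊ with hmdef
  have hm1 : ∀ i, 1 ≤ m i := by
    intro i
    have : 0 < m i := Nat.ceil_pos.mpr (div_pos hτpos (hepos _))
    omega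
  have hmlow : ∀ i, τ ≤ (m i : ℝ) * ee (ψ i) := by
    intro i
    have h1 : τ / ee (ψ i) ≤ (m i : ℝ) := Nat.le_ceil _
    have h2 : 0 < ee (ψ i) := hepos _
    calc τ = (τ / ee (ψ i)) * ee (ψ i) := by field_simp
      _ ≤ (m i : ℝ) * ee (ψ i) := mul_le_mul_of_nonneg_right h1 h2.le
  have hmhigh : ∀ i, (m i : ℝ) * ee (ψ i) ≤ τ + ee (ψ i) := by
    intro i
    have h2 : 0 < ee (ψ i) := hepos _
    have h1 : (m i : ℝ) ≤ τ / ee (ψ i) + 1 :=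
      le_of_lt (Nat.ceil_lt_add_one (by positivity))
    calc (m i : ℝ) * ee (ψ i) ≤ (τ / ee (ψ i) + 1) * ee (ψ i) :=
          mul_le_mul_of_nonneg_right h1 h2.le
      _ = τ + ee (ψ i) := by field_simp
  set W : ℕ → E →L[ℝ] E := fun i => (((c (ψ i)) ^ (m i) : (E →L[ℝ] E)ˣ) : E →L[ℝ] E) with hWdef
  have hWpow : ∀ i, W i = (CC (ψ i)) ^ (m i) := by
    intro i
    simp only [hWdef, hCC]
    exact Units.val_pow_eq_pow_val _ _
  have hWnorm : ∀ i, ‖W i‖ ≤ Real.exp ((m i : ℝ) * α (ψ i)) := by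
    intro i
    rw [hWpow i]
    calc ‖CC (ψ i) ^ (m i)‖ ≤ ‖CC (ψ i)‖ ^ (m i) := norm_pow_le' _ (hm1 i)
      _ = a (ψ i) ^ (m i) := by rw [hCCnorm]
      _ = Real.exp (α (ψ i)) ^ (m i) := by
          have : Real.exp (α (ψ i)) = a (ψ i) := Real.exp_log (hapos (ψ i))
          rw [this]
      _ = Real.exp ((m i : ℝ) * α (ψ i)) := (Real.exp_nat_mul _ _).symm
  have hmαtend : Tendsto (fun i => (m i : ℝ) * α (ψ i)) atTop (𝓝 0) := by
    have hub : ∀ᶠ i in atTop, (m i : ℝ) * α (ψ i) ≤ 2 * (τ + 1) / ((i:ℝ)+1) := by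
      filter_upwards [(hetend.comp hψmono.tendsto_atTop).eventually_lt_const
        (by norm_num : (0:ℝ) < 1/2)] with i hei
      simp only [Function.comp_apply] at hei
      have heipos := hepos (ψ i)
      have h1 := hαe (ψ i) (le_of_lt hei)
      have hψge : (i:ℝ) ≤ (ψ i : ℝ) := Nat.cast_le.mpr hψmono.le_apply
      have s1 : (m i : ℝ) * α (ψ i) ≤ (m i : ℝ) * (2 * ee (ψ i) / ((ψ i : ℝ)+1)) :=
        mul_le_mul_of_nonneg_left h1 (Nat.cast_nonneg _)
      have s2 : (m i : ℝ) * (2 * ee (ψ i) / ((ψ i : ℝ)+1))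
          = 2 * ((m i : ℝ) * ee (ψ i)) / ((ψ i : ℝ)+1) := by ring
      have s3 : 2 * ((m i : ℝ) * ee (ψ i)) / ((ψ i : ℝ)+1) ≤ 2 * (τ + 1) / ((i:ℝ)+1) := by
        have hnum : 2 * ((m i : ℝ) * ee (ψ i)) ≤ 2 * (τ + 1) := by
          have := hmhigh i
          nlinarith [hepos (ψ i), hei]
        have h0 : (0:ℝ) ≤ 2 * (τ + 1) := by nlinarith [hτpos]
        exact div_le_div₀ h0 hnum (by positivity) (by linarith)
      linarith [s1, s2 ▸ s1, s3]
    have hlb : ∀ᶠ i in atTop, (0:ℝ) ≤ (m i : ℝ) * α (ψ i) :=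
      Eventually.of_forall fun i => mul_nonneg (Nat.cast_nonneg _) (hα0 _)
    have hhigh : Tendsto (fun i : ℕ => 2 * (τ + 1) / ((i:ℝ)+1)) atTop (𝓝 0) := by
      have := tendsto_one_div_add_atTop_nhds_zero_nat.const_mul (2*(τ+1))
      simp only [mul_one_div] at this
      simpa using this
    exact tendsto_of_tendsto_of_tendsto_of_le_of_le' tendsto_const_nhds hhigh hlb hub
  have hWnormtend : Tendsto (fun i => Real.exp ((m i : ℝ) * α (ψ i))) atTop (𝓝 1) := by
    have := (Real.continuous_exp.tendsto 0).comp hmαtend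
    rwa [Real.exp_zero] at this
  have hWb : ∃ᶠ i in atTop, W i ∈ closedBall (0 : E →L[ℝ] E) 2 := by
    refine Eventually.frequently ?_
    filter_upwards [hWnormtend.eventually_lt_const (by norm_num : (1:ℝ) < 2)] with i hi
    exact mem_closedBall_zero_iff.mpr ((hWnorm i).trans hi.le)
  obtain ⟨W₀, hW₀mem, χ, hχmono, hχt⟩ :=
    (isCompact_closedBall (0 : E →L[ℝ] E) 2).tendsto_subseq' hWb
  have hW₀norm : ‖W₀‖ ≤ 1 := by
    have h1 : Tendsto (fun i => ‖W (χ i)‖) atTop (𝓝 ‖W₀‖) := hχt.norm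
    have h2 : Tendsto (fun i => Real.exp ((m (χ i) : ℝ) * α (ψ (χ i)))) atTop (𝓝 1) :=
      hWnormtend.comp hχmono.tendsto_atTop
    exact le_of_tendsto_of_tendsto' h1 h2 fun i => hWnorm (χ i)
  have hW₀det : |detC W₀| = 1 := by
    have h1 : Tendsto (fun i => |detC (W (χ i))|) atTop (𝓝 |detC W₀|) :=
      ((detC_continuous.tendsto _).comp hχt).abs
    have h2 : (fun i => |detC (W (χ i))|) = fun _ => (1:ℝ) := by
      funext i
      rw [hWpow (χ i), detC_pow, abs_pow, hdetc, one_pow]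
    rw [h2] at h1
    exact tendsto_nhds_unique h1 tendsto_const_nhds
  have hW₀K : W₀ ∈ K := ⟨hW₀norm, hW₀det⟩
  have heχ : Tendsto (fun i => ee (ψ (χ i))) atTop (𝓝 0) :=
    (hetend.comp hψmono.tendsto_atTop).comp hχmono.tendsto_atTop
  have hmete : Tendsto (fun i => (m (χ i) : ℝ) * ee (ψ (χ i))) atTop (𝓝 τ) := by
    have hupper : Tendsto (fun i => τ + ee (ψ (χ i))) atTop (𝓝 (τ + 0)) :=
      tendsto_const_nhds.add heχ
    rw [add_zero] at hupper
    exact tendsto_of_tendsto_of_tendsto_of_le_of_le tendsto_const_nhds hupper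
      (fun i => hmlow _) (fun i => hmhigh _)
  have hYχ : Tendsto (fun i => Y (ψ (χ i))) atTop (𝓝 Y₀) := hψt.comp hχmono.tendsto_atTop
  have hsmul : Tendsto (fun i => ((m (χ i) : ℝ) * ee (ψ (χ i))) • Y (ψ (χ i))) atTop
      (𝓝 (τ • Y₀)) := hmete.smul hYχ
  have hEEsmul : ∀ i, ((m (χ i) : ℝ)) • EE (ψ (χ i))
      = ((m (χ i) : ℝ) * ee (ψ (χ i))) • Y (ψ (χ i)) := by
    intro i
    simp only [hYdef]
    rw [smul_smul]
    congr 1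
    field_simp [(hepos (ψ (χ i))).ne']
  have hWest : ∀ᶠ i in atTop, ‖W (χ i) - 1 - ((m (χ i) : ℝ) * ee (ψ (χ i))) • Y (ψ (χ i))‖
      ≤ ((m (χ i) : ℝ) * ee (ψ (χ i)))^2 := by
    filter_upwards [heχ.eventually_lt_const (by norm_num : (0:ℝ) < 1/2)] with i hei
    rw [← hEEsmul i]
    have hnormee : ‖CC (ψ (χ i)) - 1‖ = ee (ψ (χ i)) := rfl
    have h1 : ‖(CC (ψ (χ i))) ^ (m (χ i)) - 1 - (m (χ i) : ℝ) • (CC (ψ (χ i)) - 1)‖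
        ≤ (1 + ee (ψ (χ i))) ^ (m (χ i)) - 1 - (m (χ i)) * ee (ψ (χ i)) := by
      have := pow_estimate (CC (ψ (χ i))) (hm1 (χ i))
      rwa [hnormee] at this
    have hme1 : (m (χ i) : ℝ) * ee (ψ (χ i)) ≤ 1 := by
      have := hmhigh (χ i)
      linarith [hτlt, hei]
    have h2 : (1 + ee (ψ (χ i))) ^ (m (χ i)) ≤ Real.exp ((m (χ i) : ℝ) * ee (ψ (χ i))) :=
      one_add_pow_le_exp _ (hepos _).le _
    have h3 : Real.exp ((m (χ i) : ℝ) * ee (ψ (χ i))) - 1 - (m (χ i) : ℝ) * ee (ψ (χ i))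
        ≤ ((m (χ i) : ℝ) * ee (ψ (χ i)))^2 :=
      exp_quad (by positivity) hme1
    have h4 : W (χ i) - 1 - (m (χ i) : ℝ) • (CC (ψ (χ i)) - 1)
        = (CC (ψ (χ i))) ^ (m (χ i)) - 1 - (m (χ i) : ℝ) • (CC (ψ (χ i)) - 1) := by
      rw [hWpow]
    have h5 : EE (ψ (χ i)) = CC (ψ (χ i)) - 1 := rfl
    rw [h5, h4]
    linarith
  have hW₀est : ‖W₀ - 1 - τ • Y₀‖ ≤ τ^2 := by
    have hlhs : Tendsto (fun i => ‖W (χ i) - 1 - ((m (χ i) : ℝ) * ee (ψ (χ i))) • Y (ψ (χ i))‖)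
        atTop (𝓝 ‖W₀ - 1 - τ • Y₀‖) :=
      ((hχt.sub tendsto_const_nhds).sub hsmul).norm
    have hrhs : Tendsto (fun i => ((m (χ i) : ℝ) * ee (ψ (χ i)))^2) atTop (𝓝 (τ^2)) :=
      hmete.pow 2
    exact le_of_tendsto_of_tendsto hlhs hrhs hWest
  have hfinal := hKdist (ψ J) W₀ hW₀K
  have hsplit : CC (ψ J) - W₀ = (EE (ψ J) - τ • Y₀) - (W₀ - 1 - τ • Y₀) := by
    have h5 : EE (ψ J) = CC (ψ J) - 1 := rfl
    rw [h5]
    abel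
  have hEEY : ‖EE (ψ J) - τ • Y₀‖ ≤ τ * (1/4) := by
    have h1 : EE (ψ J) = τ • Y (ψ J) := by
      simp only [hYdef, hτ]
      rw [smul_smul, mul_inv_cancel₀ (hepos (ψ J)).ne', one_smul]
    rw [h1, ← smul_sub, norm_smul τ (Y (ψ J) - Y₀), Real.norm_eq_abs, abs_of_pos hτpos]
    exact mul_le_mul_of_nonneg_left hJ1.le hτpos.le
  have hcontr : τ ≤ τ * (1/4) + τ^2 := by
    calc τ ≤ ‖CC (ψ J) - W₀‖ := hfinal
      _ = ‖(EE (ψ J) - τ • Y₀) - (W₀ - 1 - τ • Y₀)‖ := by rw [hsplit]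
      _ ≤ ‖EE (ψ J) - τ • Y₀‖ + ‖W₀ - 1 - τ • Y₀‖ := norm_sub_le _ _
      _ ≤ τ * (1/4) + τ^2 := add_le_add hEEY hW₀est
  nlinarith [hτpos, hτlt]

end Stmt18Proof

/-- For the adjoint representation (a representation by linear automorphisms of a
finite-dimensional normed space with `|det| = 1`), there is `κ > 0` with
`‖Ad(g⁻¹)‖ ≤ ‖Ad(g)‖^κ` for all `g`; consequently, for nonzero `v`,
`log(1/‖Ad(g)v‖) − log(1/‖v‖) ≤ κ log‖Ad(g)‖`. -/
theorem stmt18 {G E : Type*} [Group G] [NormedAddCommGroup E] [NormedSpace ℝ E]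
    [FiniteDimensional ℝ E] (Ad : G →* (E ≃L[ℝ] E))
    (hdet : ∀ g : G, |LinearMap.det ((Ad g : E →L[ℝ] E) : E →ₗ[ℝ] E)| = 1) :
    ∃ κ : ℝ, 0 < κ ∧ ∀ g : G,
      ‖((Ad g⁻¹ : E ≃L[ℝ] E) : E →L[ℝ] E)‖ ≤ ‖((Ad g : E ≃L[ℝ] E) : E →L[ℝ] E)‖ ^ κ ∧
      ∀ v : E, v ≠ 0 →
        Real.log (1 / ‖(Ad g) v‖) - Real.log (1 / ‖v‖)
          ≤ κ * Real.log ‖((Ad g : E ≃L[ℝ] E) : E →L[ℝ] E)‖ := by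
  have hmulgen : ∀ (e e' : E ≃L[ℝ] E), ((e * e' : E ≃L[ℝ] E) : E →L[ℝ] E)
      = ((e : E →L[ℝ] E) * (e' : E →L[ℝ] E)) := by
    intro e e'
    have h1 : e * e' = e'.trans e := rfl
    rw [h1, ContinuousLinearMap.mul_def, ContinuousLinearEquiv.comp_coe]
  have hone : ((1 : E ≃L[ℝ] E) : E →L[ℝ] E) = 1 := rfl
  rcases subsingleton_or_nontrivial E with hE | hE
  · refine ⟨1, one_pos, fun g => ?_⟩
    constructor
    · have h0 : ((Ad g⁻¹ : E ≃L[ℝ] E) : E →L[ℝ] E) = ((Ad g : E ≃L[ℝ] E) : E →L[ℝ] E) :=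
        Subsingleton.elim _ _
      rw [h0, Real.rpow_one]
    · intro v hv
      exact absurd (Subsingleton.elim v 0) hv
  · obtain ⟨κ, hκ1, hκ⟩ := Stmt18Proof.key (E := E)
    refine ⟨κ, lt_of_lt_of_le one_pos hκ1, fun g => ?_⟩
    have hmul1 : ((Ad g : E ≃L[ℝ] E) : E →L[ℝ] E) * ((Ad g⁻¹ : E ≃L[ℝ] E) : E →L[ℝ] E) = 1 := by
      rw [← hmulgen, ← map_mul, mul_inv_cancel, map_one, hone]
    have hmul2 : ((Ad g⁻¹ : E ≃L[ℝ] E) : E →L[ℝ] E) * ((Ad g : E ≃L[ℝ] E) : E →L[ℝ] E) = 1 := by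
      rw [← hmulgen, ← map_mul, inv_mul_cancel, map_one, hone]
    set ug : (E →L[ℝ] E)ˣ :=
      ⟨((Ad g : E ≃L[ℝ] E) : E →L[ℝ] E), ((Ad g⁻¹ : E ≃L[ℝ] E) : E →L[ℝ] E), hmul1, hmul2⟩
      with hug
    have hdetug : |Stmt18Proof.detC ((ug : (E →L[ℝ] E)ˣ) : E →L[ℝ] E)| = 1 := hdet g
    have hpart1 := hκ ug hdetug
    -- hpart1 : ‖↑ug⁻¹‖ ≤ ‖↑ug‖ ^ κ
    have hval : ((ug : (E →L[ℝ] E)ˣ) : E →L[ℝ] E) = ((Ad g : E ≃L[ℝ] E) : E →L[ℝ] E) := rfl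
    have hvalinv : ((ug⁻¹ : (E →L[ℝ] E)ˣ) : E →L[ℝ] E) = ((Ad g⁻¹ : E ≃L[ℝ] E) : E →L[ℝ] E) := rfl
    rw [hval, hvalinv] at hpart1
    refine ⟨hpart1, ?_⟩
    intro v hv
    set T : E →L[ℝ] E := ((Ad g : E ≃L[ℝ] E) : E →L[ℝ] E) with hT
    set S : E →L[ℝ] E := ((Ad g⁻¹ : E ≃L[ℝ] E) : E →L[ℝ] E) with hS
    have happly : (Ad g) v = T v := rfl
    have hST : ∀ w : E, S (T w) = w := by
      intro w
      have h1 : S (T w) = (S * T) w := rfl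
      rw [h1, hmul2]
      rfl
    have hTv0 : T v ≠ 0 := by
      intro h0
      apply hv
      have := hST v
      rw [h0, map_zero] at this
      exact this.symm
    have hTne : T ≠ 0 := by
      intro h0
      apply hTv0
      rw [h0]
      rfl
    have haT : (0:ℝ) < ‖T‖ := norm_pos_iff.mpr hTne
    have hvle : ‖v‖ ≤ ‖T‖ ^ κ * ‖T v‖ := by
      calc ‖v‖ = ‖S (T v)‖ := by rw [hST v]
        _ ≤ ‖S‖ * ‖T v‖ := ContinuousLinearMap.le_opNorm S (T v)
        _ ≤ ‖T‖ ^ κ * ‖T v‖ := mul_le_mul_of_nonneg_right hpart1 (norm_nonneg _)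
    have hlog : Real.log ‖v‖ ≤ κ * Real.log ‖T‖ + Real.log ‖T v‖ := by
      have h1 : Real.log ‖v‖ ≤ Real.log (‖T‖ ^ κ * ‖T v‖) :=
        Real.log_le_log (norm_pos_iff.mpr hv) hvle
      rwa [Real.log_mul (Real.rpow_pos_of_pos haT κ).ne' (norm_ne_zero_iff.mpr hTv0),
        Real.log_rpow haT] at h1
    rw [happly, one_div, one_div, Real.log_inv, Real.log_inv]
    linarith
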